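/- Every digraph with finite chromatic number is in O₂, i.e., has a quasi-kernel. -/
import Mathlib


/-- There is a directed path of length at most `n` from `x` to `y`. -/
def PathLe {V : Type*} (E : V → V → Prop) (n : ℕ) (x y : V) : Prop :=
  ∃ k ≤ n, ∃ f : ℕ → V, f 0 = x ∧ f k = y ∧ ∀ i < k, E (f i) (f (i + 1))

/-- A directed path of length at most `n` from `x` to `y` all of whose vertices lie in `W`. -/
def PathLeIn {V : Type*} (E : V → V → Prop) (W : Set V) (n : ℕ) (x y : V) : Prop :=
  ∃ k ≤ n, ∃ f : ℕ → V, f 0 = x ∧ f k = y ∧ (∀ i ≤ k, f i ∈ W) ∧ ∀ i < k, E (f i) (f (i + 1))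

/-- `A` spans no edges of `E` (in either direction). -/
def Indep {V : Type*} (E : V → V → Prop) (A : Set V) : Prop :=
  ∀ a ∈ A, ∀ b ∈ A, ¬ E a b

/-- The induced subgraph on `W` is in the class `O_n`: some independent set `A ⊆ W`
reaches every vertex of `W` by a directed path of length at most `n` inside `W`. -/
def OutClass {V : Type*} (E : V → V → Prop) (n : ℕ) (W : Set V) : Prop :=
  ∃ A ⊆ W, Indep E A ∧ ∀ v ∈ W, ∃ a ∈ A, PathLeIn E W n a v

/-- The induced subgraph on `W` is in the class `I_n`: some independent set `A ⊆ W`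
is reached from every vertex of `W` by a directed path of length at most `n` inside `W`. -/
def InClass {V : Type*} (E : V → V → Prop) (n : ℕ) (W : Set V) : Prop :=
  ∃ A ⊆ W, Indep E A ∧ ∀ v ∈ W, ∃ a ∈ A, PathLeIn E W n v a

/-- The induced subgraph on `W` is in `IO(m, ℓ)`. -/
def IOClass {V : Type*} (E : V → V → Prop) (m ℓ : ℕ) (W : Set V) : Prop :=
  ∃ V₁ V₂ : Set V, V₁ ∪ V₂ = W ∧ Disjoint V₁ V₂ ∧ InClass E m V₁ ∧ OutClass E ℓ V₂

/-- `E` is a tournament: no loops and exactly one direction between distinct vertices. -/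
def IsTournament {V : Type*} (E : V → V → Prop) : Prop :=
  (∀ x, ¬ E x x) ∧ ∀ x y, x ≠ y → (E x y ↔ ¬ E y x)

/-- Weakening the ambient set of a path. -/
lemma pathLeIn_mono {V : Type*} {E : V → V → Prop} {P W : Set V} (h : P ⊆ W) {n : ℕ} {x y : V}
    (hp : PathLeIn E P n x y) : PathLeIn E W n x y := by
  obtain ⟨k, hk, f, h0, hke, hmem, hstep⟩ := hp
  exact ⟨k, hk, f, h0, hke, fun i hi => h (hmem i hi), hstep⟩

/-- The trivial path of length 0. -/
lemma pathLeIn_zero {V : Type*} {E : V → V → Prop} {W : Set V} {a : V} (ha : a ∈ W) :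
    PathLeIn E W 2 a a :=
  ⟨0, by norm_num, fun _ => a, rfl, rfl, fun _ _ => ha, fun i hi => absurd hi (Nat.not_lt_zero i)⟩

/-- A single edge as a path of length 1. -/
lemma pathLeIn_one {V : Type*} {E : V → V → Prop} {W : Set V} {a b : V}
    (ha : a ∈ W) (hb : b ∈ W) (hE : E a b) : PathLeIn E W 2 a b := by
  refine ⟨1, by norm_num, fun i => if i = 0 then a else b, by simp, by simp, ?_, ?_⟩
  · intro i _
    by_cases h : i = 0 <;> simp [h, ha, hb]
  · intro i hi
    interval_cases i
    simpa using hE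

/-- Two consecutive edges as a path of length 2. -/
lemma pathLeIn_two {V : Type*} {E : V → V → Prop} {W : Set V} {a b c : V}
    (ha : a ∈ W) (hb : b ∈ W) (hc : c ∈ W) (hab : E a b) (hbc : E b c) :
    PathLeIn E W 2 a c := by
  refine ⟨2, le_refl _, fun i => if i = 0 then a else if i = 1 then b else c, by simp, by simp, ?_, ?_⟩
  · intro i _
    by_cases h0 : i = 0
    · simp [h0, ha]
    · by_cases h1 : i = 1 <;> simp [h0, h1, ha, hb, hc]
  · intro i hi
    interval_cases i
    · simpa using hab
    · simpa using hbc

/-- The key induction: a set colorable with `k` colors (no monochromatic edges) is in `O₂`. -/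
lemma outClass_of_coloring {V : Type*} (E : V → V → Prop) :
    ∀ (k : ℕ) (W : Set V),
      (∃ c : V → ℕ, (∀ v ∈ W, c v < k) ∧ ∀ u ∈ W, ∀ v ∈ W, E u v → c u ≠ c v) →
      OutClass E 2 W := by
  intro k
  induction k with
  | zero =>

    rintro W ⟨c, hlt, -⟩
    refine ⟨∅, Set.empty_subset _, ?_, ?_⟩
    · intro a ha
      exact absurd ha (Set.notMem_empty a)
    · intro v hv
      exact absurd (hlt v hv) (Nat.not_lt_zero _)
  | succ k ih =>
    rintro W ⟨c, hlt, hproper⟩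
    -- C : the last color class; P : the rest minus the out-neighborhood of C
    set C : Set V := {v | v ∈ W ∧ c v = k} with hC
    set P : Set V := {v | v ∈ W ∧ c v ≠ k ∧ ∀ u ∈ C, ¬ E u v} with hP
    have hPW : P ⊆ W := fun v hv => hv.1
    obtain ⟨Q, hQP, hQind, hQcov⟩ :=
      ih P ⟨c, fun v hv => lt_of_le_of_ne (Nat.lt_succ_iff.mp (hlt v hv.1)) hv.2.1,
        fun u hu v hv h => hproper u hu.1 v hv.1 h⟩
    set C' : Set V := {v | v ∈ C ∧ ∀ q ∈ Q, ¬ E q v} with hC'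
    have hQW : Q ⊆ W := hQP.trans hPW
    refine ⟨Q ∪ C', ?_, ?_, ?_⟩
    · -- A ⊆ W
      intro a ha
      rcases ha with ha | ha
      · exact hQW ha
      · exact ha.1.1
    · -- independence
      intro a ha b hb hE
      rcases ha with ha | ha <;> rcases hb with hb | hb
      · exact hQind a ha b hb hE
      · exact hb.2 a ha hE
      · exact (hQP hb).2.2 a ha.1 hE
      · exact hproper a ha.1.1 b hb.1.1 hE (ha.1.2.trans hb.1.2.symm)
    · -- coverage
      intro v hv
      by_cases hvk : c v = k
      · -- v is in the class C
        by_cases hq : ∃ q ∈ Q, E q v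
        · obtain ⟨q, hqQ, hqv⟩ := hq
          exact ⟨q, Or.inl hqQ, pathLeIn_one (hQW hqQ) hv hqv⟩
        · push_neg at hq
          exact ⟨v, Or.inr ⟨⟨hv, hvk⟩, hq⟩, pathLeIn_zero hv⟩
      · by_cases hpc : ∀ u ∈ C, ¬ E u v
        · -- v ∈ P : covered by Q inside P
          obtain ⟨q, hqQ, hpath⟩ := hQcov v ⟨hv, hvk, hpc⟩
          exact ⟨q, Or.inl hqQ, pathLeIn_mono hPW hpath⟩
        · -- v has an in-neighbour u in C
          push_neg at hpc
          obtain ⟨u, huC, huv⟩ := hpc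
          by_cases hu : ∀ q ∈ Q, ¬ E q u
          · exact ⟨u, Or.inr ⟨huC, hu⟩, pathLeIn_one huC.1 hv huv⟩
          · push_neg at hu
            obtain ⟨q, hqQ, hqu⟩ := hu
            exact ⟨q, Or.inl hqQ, pathLeIn_two (hQW hqQ) huC.1 hv hqu huv⟩

/-- Every digraph with finite chromatic number has a quasi-kernel. -/
theorem finite_chromatic_quasi_kernel {V : Type*} (E : V → V → Prop)
    (hchrom : ∃ (k : ℕ) (c : V → Fin k), ∀ u v, E u v → c u ≠ c v) :
    OutClass E 2 Set.univ := by
  obtain ⟨k, c, hc⟩ := hchrom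
  refine outClass_of_coloring E k Set.univ ⟨fun v => (c v : ℕ), fun v _ => (c v).isLt, ?_⟩
  intro u _ v _ hE heq
  exact hc u v hE (Fin.ext heq)
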